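/- Let k be a field, A = k_{p_{ij}}[x_1,…,x_n] a skew polynomial ring, and R = k[x_1^{α_1},…,x_n^{α_n}] a central subalgebra of A, where α_i are positive integers (so each x_i^{α_i} is central). Then A is a free R-module of rank r = ∏ α_i with basis Z = {x_1^{β_1}⋯x_n^{β_n} : 0 ≤ β_i < α_i}, and with tr : A → R the regular trace, det(tr(z_i z_j))_{r×r} = c · r^r · (∏_{i=1}^n x_i^{α_i−1})^r for some c ∈ k^×. -/

import Mathlib

noncomputable section

/-- The defining relations of the skew polynomial ring `k_{p_{ij}}[x_1, …, x_n]`: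
for `i < j`, `x_j * x_i` is identified with `p i j * (x_i * x_j)`. -/
def skewRel (k : Type*) [CommRing k] (n : ℕ) (p : Fin n → Fin n → k) :
    FreeAlgebra k (Fin n) → FreeAlgebra k (Fin n) → Prop := fun a b =>
  ∃ i j : Fin n, i < j ∧ a = FreeAlgebra.ι k j * FreeAlgebra.ι k i ∧
    b = algebraMap k _ (p i j) * (FreeAlgebra.ι k i * FreeAlgebra.ι k j)

/-- The skew polynomial ring `k_{p_{ij}}[x_1, …, x_n]`. -/
abbrev SkewPoly (k : Type*) [CommRing k] (n : ℕ) (p : Fin n → Fin n → k) :=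
  RingQuot (skewRel k n p)

/-- The generator `x_i` of the skew polynomial ring. -/
def SkewPoly.X (k : Type*) [CommRing k] (n : ℕ) (p : Fin n → Fin n → k) (i : Fin n) :
    SkewPoly k n p :=
  RingQuot.mkAlgHom k (skewRel k n p) (FreeAlgebra.ι k i)

namespace SP16

variable {k : Type*} [Field k] {n : ℕ} (p : Fin n → Fin n → k)

local notation "A" => SkewPoly k n p
local notation "XX" => SkewPoly.X k n p

theorem rel_basic {i j : Fin n} (h : i < j) :
    XX j * XX i = p i j • (XX i * XX j) := by
  have := RingQuot.mkAlgHom_rel k (s := skewRel k n p)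
    (x := FreeAlgebra.ι k j * FreeAlgebra.ι k i)
    (y := algebraMap k _ (p i j) * (FreeAlgebra.ι k i * FreeAlgebra.ι k j))
    ⟨i, j, h, rfl, rfl⟩
  simpa [SkewPoly.X, map_mul, Algebra.smul_def] using this

theorem pow_swap {i j : Fin n} (h : i < j) (a b : ℕ) :
    XX j ^ b * XX i ^ a = (p i j) ^ (a * b) • (XX i ^ a * XX j ^ b) := by
  have key : ∀ a : ℕ, XX j * XX i ^ a = (p i j) ^ a • (XX i ^ a * XX j) := by
    intro a
    induction a with
    | zero => simp
    | succ a ih =>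
      rw [pow_succ, ← mul_assoc, ih, smul_mul_assoc, mul_assoc, rel_basic p h,
        pow_succ]
      rw [mul_smul_comm, ← smul_smul, mul_assoc]
  induction b with
  | zero => simp
  | succ b ih =>
    rw [pow_succ, mul_assoc, key, mul_smul_comm, ← mul_assoc, ih, smul_mul_assoc,
      smul_smul, ← pow_add, mul_assoc, ← pow_succ]
    ring_nf


/-- ordered monomial over a list of indices -/
def P (l : List (Fin n)) (β : Fin n → ℕ) : A :=
  (l.map fun i => XX i ^ β i).prod

@[simp] theorem P_nil (β : Fin n → ℕ) : P p [] β = 1 := rfl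

theorem P_cons (a : Fin n) (l : List (Fin n)) (β : Fin n → ℕ) :
    P p (a :: l) β = XX a ^ β a * P p l β := by
  simp [P]

/-- the scalar factor in the commutation of two ordered monomials -/
def Cl (l : List (Fin n)) (β γ : Fin n → ℕ) : k :=
  match l with
  | [] => 1
  | a :: l' => (l'.map fun j => p a j ^ (β j * γ a)).prod * Cl l' β γ

@[simp] theorem Cl_nil (β γ : Fin n → ℕ) : Cl p [] β γ = 1 := rfl

@[simp] theorem Cl_cons (a : Fin n) (l : List (Fin n)) (β γ : Fin n → ℕ) :
    Cl p (a :: l) β γ = (l.map fun j => p a j ^ (β j * γ a)).prod * Cl p l β γ := rfl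

theorem swap_list (l : List (Fin n)) (i : Fin n) (hl : ∀ j ∈ l, i < j)
    (β : Fin n → ℕ) (c : ℕ) :
    P p l β * XX i ^ c =
      ((l.map fun j => p i j ^ (β j * c)).prod) • (XX i ^ c * P p l β) := by
  induction l with
  | nil => simp
  | cons a l ih =>
    rw [P_cons, mul_assoc, ih (fun j hj => hl j (List.mem_cons_of_mem a hj)),
      mul_smul_comm, ← mul_assoc, pow_swap p (hl a (List.mem_cons_self)),
      smul_mul_assoc, smul_smul, List.map_cons, List.prod_cons, mul_assoc,
      ← P_cons]
    congr 1
    ring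

theorem P_mul (l : List (Fin n)) (hl : l.Pairwise (· < ·)) (β γ : Fin n → ℕ) :
    P p l β * P p l γ = Cl p l β γ • P p l (β + γ) := by
  induction l with
  | nil => simp [Cl]
  | cons a l ih =>
    have hlt : ∀ j ∈ l, a < j := fun j hj => (List.pairwise_cons.1 hl).1 j hj
    rw [P_cons, P_cons]
    simp only [mul_assoc]
    rw [← mul_assoc (P p l β), swap_list p l a hlt β (γ a), smul_mul_assoc,
      mul_smul_comm, mul_assoc, ih (List.pairwise_cons.1 hl).2, mul_smul_comm,
      mul_smul_comm, smul_smul, ← mul_assoc, ← pow_add, Cl_cons]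
    have hba : β a + γ a = (β + γ) a := rfl
    rw [hba, ← P_cons]

/-- the ordered monomial `x₁^{β 1} ⋯ x_n^{β n}` -/
def M (β : Fin n → ℕ) : A := P p (List.finRange n) β

theorem M_mul (β γ : Fin n → ℕ) :
    M p β * M p γ = Cl p (List.finRange n) β γ • M p (β + γ) :=
  P_mul p _ (List.pairwise_lt_finRange n) β γ

@[simp] theorem M_zero : M p 0 = 1 := by
  have : ∀ l : List (Fin n), P p l 0 = 1 := by
    intro l; induction l with
    | nil => simp
    | cons a l ih => rw [P_cons, ih]; simp
  exact this _

theorem P_single (i : Fin n) (a : ℕ) :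
    ∀ l : List (Fin n), P p l (fun t => if t = i then a else 0)
      = XX i ^ (a * l.count i) := by
  intro l
  induction l with
  | nil => simp
  | cons t l ih =>
    rw [P_cons, ih, List.count_cons]
    by_cases h : t = i
    · subst h
      simp only [if_pos rfl, ← pow_add, beq_self_eq_true, if_true]
      rw [Nat.mul_add, Nat.mul_one, Nat.add_comm]
    · have h' : ¬ (t == i) = true := by simpa using h
      simp [h, h']

theorem M_single (i : Fin n) (a : ℕ) :
    M p (fun t => if t = i then a else 0) = XX i ^ a := by
  rw [M, P_single, List.count_eq_one_of_mem (List.nodup_finRange n)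
    (List.mem_finRange i), Nat.mul_one]


/-! ## A representation of `A` used to prove linear independence of monomials -/

local notation "V" => ((Fin n → ℕ) →₀ k)

/-- indicator of `i` -/
def es (i : Fin n) : Fin n → ℕ := fun t => if t = i then 1 else 0

/-- scalar picked up when `x_i` passes a monomial `x^γ` -/
def ci (i : Fin n) (γ : Fin n → ℕ) : k :=
  ∏ t ∈ Finset.univ.filter (fun t => t < i), p t i ^ γ t

theorem ci_add (i : Fin n) (γ δ : Fin n → ℕ) :
    ci p i (γ + δ) = ci p i γ * ci p i δ := by
  simp [ci, pow_add, Finset.prod_mul_distrib]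

theorem ci_es (i j : Fin n) : ci p i (es j) = if j < i then p j i else 1 := by
  by_cases h : j < i
  · rw [if_pos h, ci, Finset.prod_eq_single j]
    · simp [es]
    · intro b _ hb
      simp [es, hb]
    · intro hc
      simp only [Finset.mem_filter, Finset.mem_univ, true_and] at hc
      exact absurd h hc
  · rw [if_neg h, ci]
    apply Finset.prod_eq_one
    intro t ht
    simp only [Finset.mem_filter, Finset.mem_univ, true_and] at ht
    have : t ≠ j := fun hc => h (hc ▸ ht)
    simp [es, this]

theorem ci_eq_one (i : Fin n) (γ : Fin n → ℕ) (h : ∀ t, t < i → γ t = 0) :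
    ci p i γ = 1 := by
  rw [ci]
  apply Finset.prod_eq_one
  intro t ht
  simp only [Finset.mem_filter, Finset.mem_univ, true_and] at ht
  rw [h t ht, pow_zero]

/-- The operator by which `x_i` acts on `V`. -/
def T (i : Fin n) : V →ₗ[k] V :=
  Finsupp.lsum k fun γ => ci p i γ • Finsupp.lsingle (γ + es i)

theorem T_single (i : Fin n) (γ : Fin n → ℕ) (c : k) :
    T p i (Finsupp.single γ c) = ci p i γ • Finsupp.single (γ + es i) c := by
  simp [T]

theorem Trel {i j : Fin n} (h : i < j) :
    T p j * T p i = algebraMap k (Module.End k V) (p i j) * (T p i * T p j) := by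
  apply Finsupp.lhom_ext
  intro γ c
  have e1 : (T p j * T p i) (Finsupp.single γ c)
      = (ci p i γ * ci p j (γ + es i)) • Finsupp.single (γ + es i + es j) c := by
    rw [Module.End.mul_apply, T_single, map_smul, T_single, smul_smul]
  have e2 : (algebraMap k (Module.End k V) (p i j) * (T p i * T p j))
        (Finsupp.single γ c)
      = (p i j * (ci p j γ * ci p i (γ + es j))) • Finsupp.single (γ + es j + es i) c := by
    rw [Module.End.mul_apply, Module.End.mul_apply, T_single, map_smul, T_single,
      smul_smul, Module.algebraMap_end_apply, smul_smul]
  rw [e1, e2]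
  have h3 : γ + es i + es j = γ + es j + es i := add_right_comm _ _ _
  rw [h3]
  congr 1
  rw [ci_add, ci_add, ci_es, ci_es, if_pos h, if_neg (by exact fun hc => absurd (hc.trans h) (lt_irrefl _))]
  ring


/-- the representation of `A` on `V` -/
def Phi : SkewPoly k n p →ₐ[k] Module.End k V :=
  RingQuot.liftAlgHom k ⟨FreeAlgebra.lift k (T p), by
    rintro x y ⟨i, j, hij, rfl, rfl⟩
    simp only [map_mul, FreeAlgebra.lift_ι_apply, AlgHom.commutes]
    exact Trel p hij⟩

@[simp] theorem Phi_X (i : Fin n) : Phi p (XX i) = T p i := by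
  rw [Phi, SkewPoly.X, RingQuot.liftAlgHom_mkAlgHom_apply, FreeAlgebra.lift_ι_apply]

theorem T_pow (i : Fin n) (c : ℕ) (δ : Fin n → ℕ) (h : ∀ t, t < i → δ t = 0) :
    (T p i ^ c) (Finsupp.single δ (1:k))
      = Finsupp.single (δ + fun t => if t = i then c else 0) 1 := by
  induction c with
  | zero =>
    simp only [pow_zero, Module.End.one_apply]
    congr 1
    funext t
    simp
  | succ c ih =>
    rw [pow_succ', Module.End.mul_apply, ih, T_single, ci_eq_one, one_smul]
    · congr 1
      funext t
      simp only [Pi.add_apply, es]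
      by_cases ht : t = i <;> simp [ht, Nat.add_assoc]
    · intro t ht
      simp only [Pi.add_apply]
      rw [h t ht, if_neg (by exact fun hc => absurd (hc ▸ ht) (lt_irrefl i))]

/-- restriction of exponents to a list -/
def restr (l : List (Fin n)) (β : Fin n → ℕ) : Fin n → ℕ :=
  fun t => if t ∈ l then β t else 0

theorem Phi_P (β : Fin n → ℕ) :
    ∀ l : List (Fin n), l.Pairwise (· < ·) →
      ∀ γ : Fin n → ℕ, (∀ i ∈ l, ∀ t, t < i → γ t = 0) →
      Phi p (P p l β) (Finsupp.single γ (1:k))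
        = Finsupp.single (γ + restr l β) 1 := by
  intro l
  induction l with
  | nil =>
    intro _ γ _
    have : restr ([] : List (Fin n)) β = 0 := by
      funext t; simp [restr]
    simp [this]
  | cons a l ih =>
    intro hl γ hγ
    have hlt : ∀ j ∈ l, a < j := fun j hj => (List.pairwise_cons.1 hl).1 j hj
    rw [P_cons, map_mul, Module.End.mul_apply,
      ih (List.pairwise_cons.1 hl).2 γ
        (fun i hi t ht => hγ i (List.mem_cons_of_mem a hi) t ht),
      map_pow, Phi_X, T_pow]
    · congr 1
      funext t
      simp only [Pi.add_apply, restr]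
      by_cases hta : t = a
      · subst hta
        have : t ∉ l := fun hc => absurd (hlt t hc) (lt_irrefl t)
        simp [this]
      · by_cases htl : t ∈ l <;> simp [hta, htl, List.mem_cons]
    · intro t ht
      simp only [Pi.add_apply, restr]
      rw [hγ a (List.mem_cons_self) t ht]
      rw [if_neg (fun hc => absurd (ht.trans (hlt t hc)) (lt_irrefl t))]

theorem Phi_M (β : Fin n → ℕ) :
    Phi p (M p β) (Finsupp.single 0 (1:k)) = Finsupp.single β 1 := by
  rw [M, Phi_P p β _ (List.pairwise_lt_finRange n) 0 (fun _ _ _ _ => rfl)]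
  congr 1
  funext t
  simp [restr, List.mem_finRange]

/-- evaluation of the representation at the vacuum vector -/
def L : SkewPoly k n p →ₗ[k] V where
  toFun a := Phi p a (Finsupp.single 0 1)
  map_add' a b := by simp
  map_smul' c a := by simp

@[simp] theorem L_M (β : Fin n → ℕ) : L p (M p β) = Finsupp.single β 1 :=
  Phi_M p β

theorem M_linearIndependent : LinearIndependent k (M p) := by
  have h : (⇑(L p)) ∘ (M p) = fun β => Finsupp.single β (1:k) := by
    funext β; simp
  apply LinearIndependent.of_comp (L p)
  rw [h]
  exact (Finsupp.basisSingleOne).linearIndependent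

theorem X_eq_M (i : Fin n) : XX i = M p (es i) := by
  rw [show es i = fun t => if t = i then 1 else 0 from rfl, M_single, pow_one]

theorem span_M : Submodule.span k (Set.range (M p)) = ⊤ := by
  set S := Submodule.span k (Set.range (M p)) with hS
  have hmulle : S * S ≤ S := by
    rw [hS, Submodule.span_mul_span]
    apply Submodule.span_le.2
    rw [Set.mul_subset_iff]
    rintro x ⟨β, rfl⟩ y ⟨γ, rfl⟩
    rw [M_mul]
    exact Submodule.smul_mem _ _ (Submodule.subset_span ⟨β + γ, rfl⟩)
  have hone : (1 : A) ∈ S := by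
    rw [← M_zero p]
    exact Submodule.subset_span ⟨0, rfl⟩
  let Salg : Subalgebra k A :=
    { carrier := S
      mul_mem' := fun hx hy => hmulle (Submodule.mul_mem_mul hx hy)
      one_mem' := hone
      add_mem' := fun hx hy => S.add_mem hx hy
      algebraMap_mem' := fun c => by
        show algebraMap k _ c ∈ S
        rw [Algebra.algebraMap_eq_smul_one]
        exact S.smul_mem c hone }
  have hadj : Algebra.adjoin k (Set.range (XX)) = ⊤ := by
    have h1 : Set.range (XX)
        = (RingQuot.mkAlgHom k (skewRel k n p)) '' (Set.range (FreeAlgebra.ι k)) := by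
      rw [← Set.range_comp]
      rfl
    rw [h1, ← AlgHom.map_adjoin, FreeAlgebra.adjoin_range_ι, Algebra.map_top]
    rw [AlgHom.range_eq_top]
    exact RingQuot.mkAlgHom_surjective k _
  have hle : (⊤ : Subalgebra k A) ≤ Salg := by
    rw [← hadj]
    apply Algebra.adjoin_le
    rintro x ⟨i, rfl⟩
    show XX i ∈ S
    rw [X_eq_M]
    exact Submodule.subset_span ⟨es i, rfl⟩
  rw [eq_top_iff]
  intro x _
  exact hle (show x ∈ (⊤ : Subalgebra k A) from trivial)


theorem Cl_eq_one (β γ : Fin n → ℕ) (h : ∀ a b : Fin n, a < b → p a b ^ (β b * γ a) = 1) :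
    ∀ l : List (Fin n), l.Pairwise (· < ·) → Cl p l β γ = 1 := by
  intro l
  induction l with
  | nil => simp
  | cons a l ih =>
    intro hl
    rw [Cl_cons, ih (List.pairwise_cons.1 hl).2, mul_one]
    apply List.prod_eq_one
    intro x hx
    obtain ⟨j, hj, rfl⟩ := List.mem_map.1 hx
    exact h a j ((List.pairwise_cons.1 hl).1 j hj)

theorem list_prod_isUnit {l : List k} (h : ∀ x ∈ l, IsUnit x) : IsUnit l.prod := by
  induction l with
  | nil => simp
  | cons a l ih =>
    rw [List.prod_cons]
    exact (h a (List.mem_cons_self)).mul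
      (ih fun x hx => h x (List.mem_cons_of_mem a hx))

theorem Cl_isUnit (h : ∀ a b : Fin n, a < b → IsUnit (p a b)) (β γ : Fin n → ℕ) :
    ∀ l : List (Fin n), l.Pairwise (· < ·) → IsUnit (Cl p l β γ) := by
  intro l
  induction l with
  | nil => simp
  | cons a l ih =>
    intro hl
    rw [Cl_cons]
    refine IsUnit.mul (list_prod_isUnit ?_) (ih (List.pairwise_cons.1 hl).2)
    intro x hx
    obtain ⟨j, hj, rfl⟩ := List.mem_map.1 hx
    exact (h a j ((List.pairwise_cons.1 hl).1 j hj)).pow _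

/-- the `k`-basis of monomials -/
def kbas : Module.Basis (Fin n → ℕ) k A :=
  Module.Basis.mk (M_linearIndependent p) (by rw [span_M])

theorem kbas_repr_M (β : Fin n → ℕ) :
    (kbas p).repr (M p β) = Finsupp.single β 1 := by
  have : M p β = kbas p β := (Module.Basis.mk_apply _ _ _).symm
  rw [this, Module.Basis.repr_self]

end SP16

open SP16 in
/-- Let `A = k_{p_{ij}}[x_1, …, x_n]` and let `R` be the central
subalgebra `k[x_1^{α_1}, …, x_n^{α_n}]` of `A` (`R` is realized as a commutative ring
with an injective algebra map to `A` whose range is `k⟨x_i^{α_i}⟩`).  Then `A` is a free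
`R`-module of rank `r = ∏ α_i` with basis the monomials `x^β`, `0 ≤ β_i < α_i`, and
`det (tr (z_β z_γ)) = c ⬝ r^r ⬝ (∏ x_i^{α_i - 1})^r` for some `c ∈ k^×`, where `tr` is
the regular trace. -/
theorem discriminant_of_skew_polynomial_ring_over_monomial_center
    (k : Type*) [Field k] (n : ℕ) (p : Fin n → Fin n → k)
    (α : Fin n → ℕ) (hα : ∀ i, 0 < α i)
    (R : Type*) [CommRing R] [Algebra k R] [Algebra R (SkewPoly k n p)]
    [IsScalarTower k R (SkewPoly k n p)]
    (hinj : Function.Injective (algebraMap R (SkewPoly k n p)))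
    (hrange : (IsScalarTower.toAlgHom k R (SkewPoly k n p)).range =
      Algebra.adjoin k (Set.range fun i : Fin n => SkewPoly.X k n p i ^ (α i)))
    (z : ((i : Fin n) → Fin (α i)) → SkewPoly k n p)
    (hz : ∀ β, z β =
      ((List.finRange n).map (fun (i : Fin n) => SkewPoly.X k n p i ^ ((β i : ℕ)))).prod)
    (f : SkewPoly k n p)
    (hf : f = ((List.finRange n).map (fun (i : Fin n) => SkewPoly.X k n p i ^ (α i - 1))).prod) :
    (∃ bas : Module.Basis ((i : Fin n) → Fin (α i)) R (SkewPoly k n p), ∀ β, bas β = z β) ∧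
    (∃ c : kˣ,
      algebraMap R (SkewPoly k n p)
          (Matrix.det (Matrix.of fun β γ =>
            LinearMap.trace R (SkewPoly k n p)
              (LinearMap.mulLeft R (z β * z γ)))) =
        (c : k) • (((∏ i, α i : ℕ) : SkewPoly k n p) ^ (∏ i, α i) *
          f ^ (∏ i, α i))) := by
  classical
  have hzM : ∀ β, z β = M p (fun i => (β i : ℕ)) := fun β => by rw [hz]; rfl
  have hfM : f = M p (fun i => α i - 1) := by rw [hf]; rfl
  -- the generators' powers are in the image of R
  have hXmem : ∀ i : Fin n, SkewPoly.X k n p i ^ α i ∈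
      (IsScalarTower.toAlgHom k R (SkewPoly k n p)).range := by
    intro i
    rw [hrange]
    exact Algebra.subset_adjoin ⟨i, rfl⟩
  -- centrality consequences
  have hcent : ∀ i : Fin n, ∀ a : SkewPoly k n p,
      SkewPoly.X k n p i ^ α i * a = a * SkewPoly.X k n p i ^ α i := by
    intro i a
    obtain ⟨s, hs⟩ := hXmem i
    rw [← hs]
    exact Algebra.commutes s a
  have hrepr_ne : ∀ (c : k) (δ : Fin n → ℕ), M p δ = c • M p δ → c = 1 := by
    intro c δ h
    have := congrArg (fun x => ((kbas p).repr x) δ) h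
    simp only [map_smul, kbas_repr_M, Finsupp.smul_apply, Finsupp.single_eq_same,
      smul_eq_mul, mul_one] at this
    exact this.symm
  have hpα : ∀ i j : Fin n, i < j → p i j ^ α i = 1 ∧ p i j ^ α j = 1 := by
    intro i j hij
    constructor
    · have h1 : SkewPoly.X k n p j * SkewPoly.X k n p i ^ α i
          = p i j ^ α i • (SkewPoly.X k n p i ^ α i * SkewPoly.X k n p j) := by
        have := pow_swap p hij (α i) 1
        simpa [Nat.mul_one] using this
      rw [← hcent i (SkewPoly.X k n p j)] at h1
      have hXi : SkewPoly.X k n p i ^ α i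
          = M p (fun t => if t = i then α i else 0) := (M_single p i (α i)).symm
      have hXj : SkewPoly.X k n p j
          = M p (fun t => if t = j then 1 else 0) := by
        rw [M_single, pow_one]
      rw [hXi, hXj, M_mul, Cl_eq_one p _ _ ?hone _ (List.pairwise_lt_finRange n),
        one_smul] at h1
      case hone =>
        intro a b hab
        by_cases hbi : b = i
        · subst hbi
          have : a ≠ j := fun hc => absurd (hc ▸ hab) (not_lt_of_gt hij)
          simp [this]
        · simp [hbi]
      exact hrepr_ne _ _ h1
    · have h1 : SkewPoly.X k n p j ^ α j * SkewPoly.X k n p i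
          = p i j ^ α j • (SkewPoly.X k n p i * SkewPoly.X k n p j ^ α j) := by
        have := pow_swap p hij 1 (α j)
        simpa [Nat.one_mul] using this
      rw [hcent j (SkewPoly.X k n p i)] at h1
      have hXj : SkewPoly.X k n p j ^ α j
          = M p (fun t => if t = j then α j else 0) := (M_single p j (α j)).symm
      have hXi : SkewPoly.X k n p i
          = M p (fun t => if t = i then 1 else 0) := by
        rw [M_single, pow_one]
      rw [hXi, hXj, M_mul, Cl_eq_one p _ _ ?hone2 _ (List.pairwise_lt_finRange n),
        one_smul] at h1
      case hone2 =>
        intro a b hab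
        by_cases hbi : b = i
        · subst hbi
          have : a ≠ j := fun hc => absurd (hc ▸ hab) (not_lt_of_gt hij)
          simp [this]
        · simp [hbi]
      exact hrepr_ne _ _ h1
  
  have hpunit : ∀ i j : Fin n, i < j → IsUnit (p i j) := by
    intro i j hij
    refine IsUnit.of_mul_eq_one (p i j ^ (α i - 1)) ?_
    have h2 : p i j * p i j ^ (α i - 1) = p i j ^ (α i - 1 + 1) := (pow_succ' _ _).symm
    have h3 : α i - 1 + 1 = α i := by have := hα i; omega
    rw [h2, h3]
    exact (hpα i j hij).1
  have hClone : ∀ (q γ : Fin n → ℕ),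
      Cl p (List.finRange n) (fun i => α i * q i) γ = 1 ∧
      Cl p (List.finRange n) γ (fun i => α i * q i) = 1 := by
    intro q γ
    constructor
    · refine Cl_eq_one p _ _ (fun a b hab => ?_) _ (List.pairwise_lt_finRange n)
      rw [show α b * q b * γ a = α b * (q b * γ a) by ring, pow_mul,
        (hpα a b hab).2, one_pow]
    · refine Cl_eq_one p _ _ (fun a b hab => ?_) _ (List.pairwise_lt_finRange n)
      rw [show γ b * (α a * q a) = α a * (q a * γ b) by ring, pow_mul,
        (hpα a b hab).1, one_pow]
  have hMα : ∀ (q γ : Fin n → ℕ),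
      M p (fun i => α i * q i) * M p γ = M p (fun i => α i * q i + γ i) := by
    intro q γ
    rw [M_mul, (hClone q γ).1, one_smul]
    rfl
  have hρex : ∀ q : Fin n → ℕ, ∃ s : R, algebraMap R (SkewPoly k n p) s
      = M p (fun i => α i * q i) := by
    intro q
    have hm : M p (fun i => α i * q i)
        ∈ (IsScalarTower.toAlgHom k R (SkewPoly k n p)).range := by
      rw [hrange]
      show ((List.finRange n).map fun i => SkewPoly.X k n p i ^ (α i * q i)).prod
        ∈ Algebra.adjoin k (Set.range fun i => SkewPoly.X k n p i ^ α i)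
      apply Subalgebra.list_prod_mem
      intro x hx
      obtain ⟨i, _, rfl⟩ := List.mem_map.1 hx
      rw [pow_mul]
      refine pow_mem ?_ _
      exact Algebra.subset_adjoin ⟨i, rfl⟩
    obtain ⟨s0, hs0⟩ := hm
    exact ⟨s0, hs0⟩
  choose ρ hρ using hρex
  -- the image of R is the k-span of the monomials with exponents multiples of α
  have hRspan : ∀ s : R, algebraMap R (SkewPoly k n p) s ∈
      Submodule.span k (Set.range fun q : Fin n → ℕ => M p (fun i => α i * q i)) := by
    intro s
    set Sp := Submodule.span k (Set.range fun q : Fin n → ℕ => M p (fun i => α i * q i))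
      with hSp
    have hone : (1 : SkewPoly k n p) ∈ Sp := by
      apply Submodule.subset_span
      refine ⟨0, ?_⟩
      show M p (fun i => α i * (0 : Fin n → ℕ) i) = 1
      rw [show (fun i => α i * (0 : Fin n → ℕ) i) = (0 : Fin n → ℕ) by funext i; simp,
        M_zero]
    have hmulle : Sp * Sp ≤ Sp := by
      rw [hSp, Submodule.span_mul_span]
      apply Submodule.span_le.2
      rw [Set.mul_subset_iff]
      rintro x ⟨q, rfl⟩ y ⟨q', rfl⟩
      rw [hMα, show (fun i => α i * q i + α i * q' i)
        = (fun i => α i * (q + q') i) by funext i; simp [Pi.add_apply]; ring]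
      exact Submodule.subset_span ⟨q + q', rfl⟩
    let Ralg : Subalgebra k (SkewPoly k n p) :=
      { carrier := Sp
        mul_mem' := fun hx hy => hmulle (Submodule.mul_mem_mul hx hy)
        one_mem' := hone
        add_mem' := fun hx hy => Sp.add_mem hx hy
        algebraMap_mem' := fun c => by
          show algebraMap k _ c ∈ Sp
          rw [Algebra.algebraMap_eq_smul_one]
          exact Sp.smul_mem c hone }
    have hsmem : algebraMap R (SkewPoly k n p) s
        ∈ Algebra.adjoin k (Set.range fun i => SkewPoly.X k n p i ^ α i) := by
      rw [← hrange]
      exact ⟨s, rfl⟩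
    have hle : Algebra.adjoin k (Set.range fun i => SkewPoly.X k n p i ^ α i) ≤ Ralg := by
      apply Algebra.adjoin_le
      rintro x ⟨i, rfl⟩
      show SkewPoly.X k n p i ^ α i ∈ Sp
      apply Submodule.subset_span
      refine ⟨fun t => if t = i then 1 else 0, ?_⟩
      show M p (fun t => α t * (if t = i then 1 else 0)) = SkewPoly.X k n p i ^ α i
      rw [show (fun t => α t * (if t = i then 1 else 0))
        = (fun t => if t = i then α i else 0) by funext t; by_cases h : t = i <;> simp [h]]
      exact M_single p i (α i)
    exact hle hsmem
  -- decomposition of an arbitrary monomial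
  have hMsplit : ∀ γ : Fin n → ℕ, M p γ
      = ρ (fun i => γ i / α i) • z (fun i => ⟨γ i % α i, Nat.mod_lt _ (hα i)⟩) := by
    intro γ
    rw [Algebra.smul_def, hρ, hzM, hMα]
    congr 1
    funext i
    exact (Nat.div_add_mod (γ i) (α i)).symm
  -- uniqueness of the division
  have hnat : ∀ (i : Fin n) (a c b d : ℕ), b < α i → d < α i →
      α i * a + b = α i * c + d → a = c ∧ b = d := by
    intro i a c b d hb hd h
    have h1 : (α i * a + b) / α i = (α i * c + d) / α i := by rw [h]
    rw [Nat.mul_add_div (hα i), Nat.mul_add_div (hα i), Nat.div_eq_of_lt hb,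
      Nat.div_eq_of_lt hd] at h1
    have h2 : (α i * a + b) % α i = (α i * c + d) % α i := by rw [h]
    rw [Nat.mul_add_mod, Nat.mul_add_mod, Nat.mod_eq_of_lt hb, Nat.mod_eq_of_lt hd] at h2
    omega
  have hmodeq : ∀ (q q₀ : Fin n → ℕ) (β β₀ : (i : Fin n) → Fin (α i)),
      (fun i => α i * q i + (β i : ℕ)) = (fun i => α i * q₀ i + (β₀ i : ℕ))
        → (q = q₀ ∧ β = β₀) := by
    intro q q₀ β β₀ h
    constructor
    · funext i
      exact (hnat i (q i) (q₀ i) (β i) (β₀ i) (β i).isLt (β₀ i).isLt (congrFun h i)).1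
    · funext i
      exact Fin.ext
        (hnat i (q i) (q₀ i) (β i) (β₀ i) (β i).isLt (β₀ i).isLt (congrFun h i)).2
  -- the coordinate functional of the k-basis of monomials
  have hcoordM : ∀ (δ δ₀ : Fin n → ℕ) (c : k),
      ((kbas p).repr (c • M p δ)) δ₀ = c * (if δ = δ₀ then 1 else 0) := by
    intro δ δ₀ c
    rw [map_smul, kbas_repr_M]
    simp [Finsupp.single_apply]
  -- R-linear independence of the z's
  have hindep : LinearIndependent R z := by
    rw [linearIndependent_iff']
    intro s g hsum β₀ hβ₀
    apply hinj
    rw [map_zero]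
    have hdex := fun β => Finsupp.mem_span_range_iff_exists_finsupp.1 (hRspan (g β))
    choose d hd using hdex
    have key : ∀ q₀ : Fin n → ℕ, d β₀ q₀ = 0 := by
      intro q₀
      set δ₀ : Fin n → ℕ := fun i => α i * q₀ i + (β₀ i : ℕ) with hδ₀
      set F : SkewPoly k n p →ₗ[k] k :=
        (Finsupp.lapply δ₀).comp ((kbas p).repr : SkewPoly k n p →ₗ[k] _) with hF
      have hF0 : F (∑ β ∈ s, g β • z β) = 0 := by rw [hsum, map_zero]
      have hterm : ∀ β, F (g β • z β)
          = (d β).sum fun q c => c * (if q = q₀ ∧ β = β₀ then 1 else 0) := by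
        intro β
        rw [Algebra.smul_def, ← hd β, Finsupp.sum_mul]
        rw [map_finsuppSum]
        apply Finsupp.sum_congr
        intro q _
        rw [smul_mul_assoc, hzM, hMα]
        have : F ((d β q) • M p (fun i => α i * q i + ((β i : ℕ))))
            = (d β q) * (if (fun i => α i * q i + ((β i : ℕ))) = δ₀ then 1 else 0) :=
          hcoordM _ _ _
        rw [this]
        congr 1
        by_cases hq : (fun i => α i * q i + ((β i : ℕ))) = δ₀
        · rw [if_pos hq, if_pos (hmodeq _ _ _ _ hq)]
        · rw [if_neg hq, if_neg]
          rintro ⟨rfl, rfl⟩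
          exact hq rfl
      rw [map_sum] at hF0
      have h1 : ∑ β ∈ s, F (g β • z β) = d β₀ q₀ := by
        rw [Finset.sum_eq_single_of_mem β₀ hβ₀]
        · rw [hterm]
          have : ((d β₀).sum fun q c => c * (if q = q₀ ∧ β₀ = β₀ then 1 else 0))
              = (d β₀).sum fun q c => if q = q₀ then c else 0 := by
            apply Finsupp.sum_congr
            intro q _
            by_cases hq : q = q₀ <;> simp [hq]
          rw [this, Finsupp.sum_ite_eq' (d β₀) q₀ fun _ c => c]
          by_cases hmem : q₀ ∈ (d β₀).support
          · rw [if_pos hmem]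
          · rw [if_neg hmem]
            exact (Finsupp.notMem_support_iff.1 hmem).symm
        · intro β hβs hβne
          rw [hterm]
          apply Finset.sum_eq_zero
          intro q _
          show d β q * (if q = q₀ ∧ β = β₀ then 1 else 0) = 0
          rw [if_neg (fun hc => hβne hc.2), mul_zero]
      rw [h1] at hF0
      exact hF0
    rw [← hd β₀]
    have : d β₀ = 0 := Finsupp.ext key
    rw [this, Finsupp.sum_zero_index]
  -- the z's span over R
  have hspanR : ⊤ ≤ Submodule.span R (Set.range z) := by
    have h1 : Submodule.span k (Set.range (M p)) ≤
        Submodule.restrictScalars k (Submodule.span R (Set.range z)) := by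
      apply Submodule.span_le.2
      rintro x ⟨γ, rfl⟩
      show M p γ ∈ Submodule.span R (Set.range z)
      rw [hMsplit γ]
      exact Submodule.smul_mem _ _ (Submodule.subset_span ⟨_, rfl⟩)
    intro x _
    have hx : x ∈ Submodule.span k (Set.range (M p)) := by rw [span_M]; trivial
    exact h1 hx
  set zbas : Module.Basis ((i : Fin n) → Fin (α i)) R (SkewPoly k n p) :=
    Module.Basis.mk hindep hspanR with hzbas
  refine ⟨⟨zbas, fun β => Module.Basis.mk_apply _ _ _⟩, ?_⟩
  
  -- ### the trace computation
  set r : ℕ := ∏ i, α i with hr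
  have hcardI : Fintype.card ((i : Fin n) → Fin (α i)) = r := by
    rw [Fintype.card_pi]
    simp [hr]
  set σ : ((i : Fin n) → Fin (α i)) → ((i : Fin n) → Fin (α i)) :=
    fun β i => ⟨(α i - (β i : ℕ)) % α i, Nat.mod_lt _ (hα i)⟩ with hσdef
  set t : ((i : Fin n) → Fin (α i)) → (Fin n → ℕ) :=
    fun β i => if (β i : ℕ) = 0 then 0 else 1 with htdef
  have hσσ : ∀ β, σ (σ β) = β := by
    intro β
    funext i
    apply Fin.ext
    show (α i - ((α i - (β i : ℕ)) % α i)) % α i = (β i : ℕ)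
    have hb := (β i).isLt
    rcases Nat.eq_zero_or_pos (β i : ℕ) with h0 | h0
    · rw [h0, Nat.sub_zero, Nat.mod_self, Nat.sub_zero, Nat.mod_self]
    · have h1 : (α i - (β i : ℕ)) % α i = α i - (β i : ℕ) := Nat.mod_eq_of_lt (by omega)
      rw [h1, Nat.sub_sub_self (le_of_lt hb), Nat.mod_eq_of_lt hb]
  have hβσ : ∀ (β : (i : Fin n) → Fin (α i)) (i : Fin n),
      (β i : ℕ) + (σ β i : ℕ) = α i * t β i := by
    intro β i
    show (β i : ℕ) + (α i - (β i : ℕ)) % α i = α i * (if (β i : ℕ) = 0 then 0 else 1)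
    have hb := (β i).isLt
    rcases Nat.eq_zero_or_pos (β i : ℕ) with h0 | h0
    · rw [h0, if_pos rfl, Nat.sub_zero, Nat.mod_self]
      omega
    · have h1 : (α i - (β i : ℕ)) % α i = α i - (β i : ℕ) := Nat.mod_eq_of_lt (by omega)
      rw [if_neg (by omega), h1]
      omega
  -- modular arithmetic helper
  have hmod : ∀ (i : Fin n) (dd ww : ℕ), ww < α i →
      ((dd + ww) % α i = ww ↔ dd % α i = 0) := by
    intro i dd ww hw
    have hs : dd % α i < α i := Nat.mod_lt _ (hα i)
    have key : (dd + ww) % α i = (dd % α i + ww) % α i := by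
      have h1 : dd % α i + α i * (dd / α i) = dd := Nat.mod_add_div dd (α i)
      have h2 : dd + ww = dd % α i + ww + α i * (dd / α i) := by omega
      rw [h2, Nat.add_mul_mod_self_left]
    rw [key]
    set s := dd % α i with hsdef
    rcases Nat.eq_zero_or_pos s with h0 | h0
    · rw [h0, Nat.zero_add, Nat.mod_eq_of_lt hw]
      simp [h0]
    · by_cases hlt : s + ww < α i
      · rw [Nat.mod_eq_of_lt hlt]
        omega
      · have h2 : (s + ww) % α i = s + ww - α i := by
          rw [Nat.mod_eq_sub_mod (by omega), Nat.mod_eq_of_lt (by omega)]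
        rw [h2]
        omega
  -- the representation of a monomial in the z-basis
  have hreprM : ∀ δ : Fin n → ℕ, zbas.repr (M p δ)
      = Finsupp.single (fun i => (⟨δ i % α i, Nat.mod_lt _ (hα i)⟩ : Fin (α i)))
        (ρ (fun i => δ i / α i)) := by
    intro δ
    rw [hMsplit δ, show z (fun i => (⟨δ i % α i, Nat.mod_lt _ (hα i)⟩ : Fin (α i)))
      = zbas (fun i => (⟨δ i % α i, Nat.mod_lt _ (hα i)⟩ : Fin (α i)))
      from (Module.Basis.mk_apply _ _ _).symm, map_smul, Module.Basis.repr_self,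
      Finsupp.smul_single, smul_eq_mul, mul_one]
  have htrace : ∀ (β γ : (i : Fin n) → Fin (α i)),
      LinearMap.trace R (SkewPoly k n p) (LinearMap.mulLeft R (z β * z γ))
      = ∑ w : (i : Fin n) → Fin (α i), (zbas.repr ((z β * z γ) * z w)) w := by
    intro β γ
    rw [LinearMap.trace_eq_matrix_trace R zbas, Matrix.trace]
    apply Finset.sum_congr rfl
    intro w _
    rw [Matrix.diag_apply, LinearMap.toMatrix_apply, LinearMap.mulLeft_apply,
      Module.Basis.mk_apply]
  -- the product of three z's
  have hzzz : ∀ (β γ w : (i : Fin n) → Fin (α i)),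
      (z β * z γ) * z w
      = (Cl p (List.finRange n) (fun i => (β i : ℕ)) (fun i => (γ i : ℕ))
          * Cl p (List.finRange n) (fun i => (β i : ℕ) + (γ i : ℕ)) (fun i => (w i : ℕ)))
        • M p (fun i => (β i : ℕ) + (γ i : ℕ) + (w i : ℕ)) := by
    intro β γ w
    rw [hzM, hzM, hzM, M_mul, smul_mul_assoc, M_mul, smul_smul]
    rfl
  
  have hreprMs : ∀ (c : k) (δ : Fin n → ℕ) (w : (i : Fin n) → Fin (α i)),
      (zbas.repr (c • M p δ)) w
      = c • (if (fun i => (⟨δ i % α i, Nat.mod_lt _ (hα i)⟩ : Fin (α i))) = w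
          then ρ (fun i => δ i / α i) else 0) := by
    intro c δ w
    rw [← algebraMap_smul R c (M p δ), map_smul, hreprM, Finsupp.smul_apply,
      Finsupp.single_apply, algebraMap_smul]
  have hM0 : ∀ (β γ : (i : Fin n) → Fin (α i)), γ ≠ σ β →
      LinearMap.trace R (SkewPoly k n p) (LinearMap.mulLeft R (z β * z γ)) = 0 := by
    intro β γ hne
    have hex : ∃ i : Fin n, ((β i : ℕ) + (γ i : ℕ)) % α i ≠ 0 := by
      by_contra hc
      push_neg at hc
      apply hne
      funext i
      apply Fin.ext
      show (γ i : ℕ) = (α i - (β i : ℕ)) % α i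
      have hb := (β i).isLt
      have hg := (γ i).isLt
      obtain ⟨c, hcc⟩ := Nat.dvd_of_mod_eq_zero (hc i)
      have hc2 : c = 0 ∨ c = 1 := by
        rcases c with _ | _ | c
        · left; rfl
        · right; rfl
        · exfalso
          have h3 : α i * 2 ≤ α i * (c + 1 + 1) := Nat.mul_le_mul_left _ (by omega)
          omega
      rcases hc2 with rfl | rfl
      · have h4 : (γ i : ℕ) = 0 ∧ (β i : ℕ) = 0 := by omega
        rw [h4.1, h4.2, Nat.sub_zero, Nat.mod_self]
      · have h6 : (α i - (β i : ℕ)) % α i = α i - (β i : ℕ) :=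
          Nat.mod_eq_of_lt (by omega)
        rw [h6]
        omega
    obtain ⟨i0, hi0⟩ := hex
    rw [htrace]
    apply Finset.sum_eq_zero
    intro w _
    rw [hzzz, hreprMs]
    rw [if_neg, smul_zero]
    intro hcfun
    have h7 := congrFun hcfun i0
    have h8 : ((β i0 : ℕ) + (γ i0 : ℕ) + (w i0 : ℕ)) % α i0 = (w i0 : ℕ) :=
      congrArg Fin.val h7
    rw [hmod i0 _ _ (w i0).isLt] at h8
    exact hi0 h8
  have hM1 : ∀ β : (i : Fin n) → Fin (α i),
      LinearMap.trace R (SkewPoly k n p) (LinearMap.mulLeft R (z β * z (σ β)))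
      = (r : ℕ) • ((Cl p (List.finRange n) (fun i => (β i : ℕ)) (fun i => (σ β i : ℕ)))
          • ρ (t β)) := by
    intro β
    rw [htrace]
    have hterm : ∀ w : (i : Fin n) → Fin (α i),
        (zbas.repr ((z β * z (σ β)) * z w)) w
        = (Cl p (List.finRange n) (fun i => (β i : ℕ)) (fun i => (σ β i : ℕ)))
            • ρ (t β) := by
      intro w
      rw [hzzz]
      have h2 : Cl p (List.finRange n) (fun i => (β i : ℕ) + (σ β i : ℕ))
          (fun i => (w i : ℕ)) = 1 := by
        rw [show (fun i => (β i : ℕ) + (σ β i : ℕ)) = fun i => α i * t β i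
          from funext (hβσ β)]
        exact (hClone (t β) (fun i => (w i : ℕ))).1
      rw [h2, mul_one,
        show (fun i => (β i : ℕ) + (σ β i : ℕ) + (w i : ℕ))
          = fun i => α i * t β i + (w i : ℕ) from funext fun i => by rw [hβσ],
        hreprMs]
      have hq : (fun i => (α i * t β i + (w i : ℕ)) / α i) = t β := by
        funext i
        rw [Nat.mul_add_div (hα i), Nat.div_eq_of_lt (w i).isLt, Nat.add_zero]
      have hrem : (fun i => (⟨(α i * t β i + (w i : ℕ)) % α i,
          Nat.mod_lt _ (hα i)⟩ : Fin (α i))) = w := by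
        funext i
        apply Fin.ext
        show (α i * t β i + (w i : ℕ)) % α i = (w i : ℕ)
        rw [Nat.mul_add_mod, Nat.mod_eq_of_lt (w i).isLt]
      rw [hq, hrem, if_pos rfl]
    rw [Finset.sum_congr rfl (fun w _ => hterm w), Finset.sum_const,
      Finset.card_univ, hcardI]
  
  set dd : ((i : Fin n) → Fin (α i)) → R := fun β =>
    (r : ℕ) • ((Cl p (List.finRange n) (fun i => (β i : ℕ)) (fun i => (σ β i : ℕ)))
      • ρ (t β)) with hdd
  set σe : Equiv.Perm ((i : Fin n) → Fin (α i)) := ⟨σ, σ, hσσ, hσσ⟩ with hσe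
  have hmat : (Matrix.of fun β γ => LinearMap.trace R (SkewPoly k n p)
      (LinearMap.mulLeft R (z β * z γ)))
      = Matrix.diagonal dd * (σe.permMatrix R) := by
    ext β γ
    rw [Matrix.diagonal_mul, Matrix.of_apply]
    have hperm : σe.permMatrix R β γ = if σ β = γ then 1 else 0 := by
      simp [Equiv.Perm.permMatrix, PEquiv.toMatrix_apply, Equiv.toPEquiv_apply,
        Option.mem_def, hσe]
    rw [hperm]
    by_cases hγ : γ = σ β
    · rw [if_pos hγ.symm, mul_one, hγ, hM1]
    · rw [if_neg (fun hc => hγ hc.symm), mul_zero, hM0 β γ hγ]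
  have hdet : Matrix.det (Matrix.of fun β γ => LinearMap.trace R (SkewPoly k n p)
      (LinearMap.mulLeft R (z β * z γ)))
      = (∏ β, dd β) * (((Equiv.Perm.sign σe : ℤˣ) : ℤ) : R) := by
    rw [hmat, Matrix.det_mul, Matrix.det_diagonal, Matrix.det_permutation]
  have hρprod : ∀ (s : Finset ((i : Fin n) → Fin (α i)))
      (u : ((i : Fin n) → Fin (α i)) → Fin n → ℕ),
      algebraMap R (SkewPoly k n p) (∏ β ∈ s, ρ (u β))
        = M p (fun i => α i * ∑ β ∈ s, u β i) := by
    intro s u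
    induction s using Finset.induction_on with
    | empty =>
      rw [Finset.prod_empty, map_one,
        show (fun i => α i * ∑ β ∈ (∅ : Finset ((i : Fin n) → Fin (α i))), u β i)
          = (0 : Fin n → ℕ) by funext i; simp, M_zero]
    | insert _ _ hb ih =>
      rw [Finset.prod_insert hb, map_mul, hρ, ih, hMα]
      congr 1
      funext i
      rw [Finset.sum_insert hb]
      ring
  have hrange_sum : ∀ m : ℕ,
      (∑ j ∈ Finset.range m, if j = 0 then 0 else 1) = m - 1 := by
    intro m
    induction m with
    | zero => simp
    | succ m ih =>
      rw [Finset.sum_range_succ, ih]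
      by_cases hm : m = 0
      · simp [hm]
      · rw [if_neg hm]
        omega
  have hsumt : ∀ i : Fin n, α i * (∑ β : (i' : Fin n) → Fin (α i'), t β i)
      = r * (α i - 1) := by
    intro i
    have hcardsub : Fintype.card ((j : {j // j ≠ i}) → Fin (α (j : Fin n)))
        = ∏ j ∈ Finset.univ.erase i, α j := by
      rw [Fintype.card_pi]
      have hc1 : ∀ x : {j // j ≠ i}, Fintype.card (Fin (α (x : Fin n))) = α (x : Fin n) :=
        fun x => Fintype.card_fin _
      rw [Finset.prod_congr rfl (fun x _ => hc1 x)]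
      exact (Finset.prod_subtype (Finset.univ.erase i)
        (fun j => by simp [Finset.mem_erase]) (fun j => α j)).symm
    have step : (∑ x : Fin (α i), ∑ _y : (j : {j // j ≠ i}) → Fin (α (j : Fin n)),
          if (x : ℕ) = 0 then (0 : ℕ) else 1)
        = (∏ j ∈ Finset.univ.erase i, α j) * (α i - 1) := by
      have hinner : ∀ x : Fin (α i),
          (∑ _y : (j : {j // j ≠ i}) → Fin (α (j : Fin n)),
            if (x : ℕ) = 0 then (0 : ℕ) else 1)
          = (∏ j ∈ Finset.univ.erase i, α j) * (if (x : ℕ) = 0 then 0 else 1) := by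
        intro x
        rw [Finset.sum_const, Finset.card_univ, smul_eq_mul, hcardsub]
      rw [Finset.sum_congr rfl (fun x _ => hinner x), ← Finset.mul_sum]
      congr 1
      rw [show (fun x : Fin (α i) => if (x : ℕ) = 0 then (0:ℕ) else 1)
        = fun x : Fin (α i) => (fun j : ℕ => if j = 0 then 0 else 1) (x : ℕ) from rfl]
      rw [Fin.sum_univ_eq_sum_range (fun j => if j = 0 then (0:ℕ) else 1) (α i)]
      exact hrange_sum (α i)
    have h1 : (∑ β : (i' : Fin n) → Fin (α i'), t β i)
        = (∏ j ∈ Finset.univ.erase i, α j) * (α i - 1) := by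
      refine Eq.trans (Fintype.sum_equiv (Equiv.piSplitAt i (fun j => Fin (α j)))
        (fun β => t β i)
        (fun y => if (y.1 : ℕ) = 0 then (0:ℕ) else 1) (fun β => rfl)) ?_
      exact (Fintype.sum_prod_type _).trans step
    rw [h1]
    have h2 : α i * ∏ j ∈ Finset.univ.erase i, α j = r :=
      Finset.mul_prod_erase _ _ (Finset.mem_univ i)
    calc α i * ((∏ j ∈ Finset.univ.erase i, α j) * (α i - 1))
        = (α i * ∏ j ∈ Finset.univ.erase i, α j) * (α i - 1) := by ring
      _ = r * (α i - 1) := by rw [h2]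
  
  -- powers of a monomial
  have hMpow : ∀ (g : Fin n → ℕ) (s : ℕ), ∃ u : kˣ,
      (M p g) ^ s = (u : k) • M p (fun i => s * g i) := by
    intro g s
    induction s with
    | zero =>
      refine ⟨1, ?_⟩
      rw [pow_zero, Units.val_one, one_smul,
        show (fun i => 0 * g i) = (0 : Fin n → ℕ) by funext i; simp, M_zero]
    | succ s ih =>
      obtain ⟨u, hu⟩ := ih
      have hcl := Cl_isUnit p hpunit (fun i => s * g i) g (List.finRange n)
        (List.pairwise_lt_finRange n)
      refine ⟨u * hcl.unit, ?_⟩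
      have hfun : ((fun i => s * g i) + g) = fun i => (s + 1) * g i := by
        funext i
        show s * g i + g i = (s + 1) * g i
        ring
      rw [pow_succ, hu, smul_mul_assoc, M_mul, smul_smul, Units.val_mul,
        IsUnit.unit_spec, hfun]
  obtain ⟨uf, huf⟩ : ∃ u : kˣ, f ^ r = (u : k) • M p (fun i => r * (α i - 1)) := by
    rw [hfM]
    exact hMpow _ r
  set CC : ((i : Fin n) → Fin (α i)) → k := fun β =>
    Cl p (List.finRange n) (fun i => (β i : ℕ)) (fun i => (σ β i : ℕ)) with hCC
  have hCCu : ∀ β, IsUnit (CC β) :=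
    fun β => Cl_isUnit p hpunit _ _ _ (List.pairwise_lt_finRange n)
  have hUUc : ((∏ β, (hCCu β).unit : kˣ) : k) = ∏ β, CC β := by
    rw [← Units.coeHom_apply, map_prod]
    exact Finset.prod_congr rfl fun β _ => congrArg _ rfl
  have hddval : ∀ β, dd β = ((r : ℕ) : R) * (algebraMap k R (CC β) * ρ (t β)) := by
    intro β
    show (r : ℕ) • ((CC β) • ρ (t β)) = _
    rw [nsmul_eq_mul, Algebra.smul_def]
  have hmapdd : algebraMap R (SkewPoly k n p) (∏ β, dd β)
      = ((r : ℕ) : SkewPoly k n p) ^ r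
        * ((∏ β, CC β) • M p (fun i => r * (α i - 1))) := by
    have h1 : (∏ β, dd β) = ((r : ℕ) : R) ^ r
        * (algebraMap k R (∏ β, CC β) * ∏ β, ρ (t β)) := by
      rw [Finset.prod_congr rfl (fun β _ => hddval β), Finset.prod_mul_distrib,
        Finset.prod_const, Finset.card_univ, hcardI, Finset.prod_mul_distrib,
        ← map_prod (algebraMap k R)]
    rw [h1, map_mul, map_pow, map_natCast, map_mul,
      ← IsScalarTower.algebraMap_apply k R (SkewPoly k n p), hρprod Finset.univ t,
      show (fun i => α i * ∑ β, t β i) = fun i => r * (α i - 1)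
        from funext fun i => hsumt i, ← Algebra.smul_def]
  -- the final assembly
  refine ⟨(Units.map (Int.castRingHom k).toMonoidHom (Equiv.Perm.sign σe))
    * (∏ β, (hCCu β).unit) * uf⁻¹, ?_⟩
  rw [hdet, map_mul, map_intCast, hmapdd]
  have hMq : M p (fun i => r * (α i - 1)) = ((uf⁻¹ : kˣ) : k) • f ^ r := by
    rw [huf, smul_smul, ← Units.val_mul, inv_mul_cancel, Units.val_one, one_smul]
  rw [hMq, smul_smul, mul_smul_comm, smul_mul_assoc]
  have hsg : (((r : ℕ) : SkewPoly k n p) ^ r * f ^ r)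
        * (((Equiv.Perm.sign σe : ℤˣ) : ℤ) : SkewPoly k n p)
      = ((((Equiv.Perm.sign σe : ℤˣ) : ℤ) : k))
          • (((r : ℕ) : SkewPoly k n p) ^ r * f ^ r) := by
    rw [← (Int.cast_commute (((Equiv.Perm.sign σe : ℤˣ) : ℤ)) _).eq,
      ← zsmul_eq_mul, ← Int.cast_smul_eq_zsmul k]
  rw [hsg, smul_smul]
  congr 1
  rw [Units.val_mul, Units.val_mul, hUUc]
  have hsuc : ((Units.map (Int.castRingHom k).toMonoidHom (Equiv.Perm.sign σe) : kˣ) : k)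
      = (((Equiv.Perm.sign σe : ℤˣ) : ℤ) : k) := rfl
  rw [hsuc]
  ring
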